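/- arXiv:2106.00581 — 3 statements merged into one kernel-verified Lean document; each statement's English description precedes it below -/
import Mathlib

section
/- Fix i and let c_i < 0 (homophilous case), with δ_j > 0, c_j ≤ 1 for all j, ψ_N = (1/N)∑c_j < 1, φ_N = (1/N)∑δ_j. Then the difference δ̄_i − δ_i = (φ_N/(1−ψ_N)) c_i is strictly decreasing in δ_j for every j, strictly decreasing in c_j for every j ≠ i, and strictly increasing in c_i. -/
open Finset

/-- Monotonicity (in the sense of partial derivatives) of the homophilous
adjustment `δ̄_i − δ_i = (φ_N/(1−ψ_N)) c_i` with respect to the parameters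
`δ_j` (all `j`), `c_j` (`j ≠ i`) and `c_i`. -/
theorem homophilous_adjustment_monotonicity (N : ℕ) (hN : 1 ≤ N) (δ c : Fin N → ℝ)
    (hδ : ∀ j, 0 < δ j) (hc : ∀ j, c j ≤ 1)
    (φ ψ : ℝ) (hφ : φ = (∑ j, δ j) / N) (hψ : ψ = (∑ j, c j) / N) (hψ1 : ψ < 1)
    (i : Fin N) (hci : c i < 0) :
    (∀ j : Fin N,
      deriv (fun x : ℝ => ((∑ k, Function.update δ j x k) / N) / (1 - ψ) * c i) (δ j) < 0) ∧
    (∀ j : Fin N, j ≠ i →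
      deriv (fun x : ℝ => φ / (1 - (∑ k, Function.update c j x k) / N) * c i) (c j) < 0) ∧
    (0 < deriv (fun x : ℝ => φ / (1 - (∑ k, Function.update c i x k) / N) * x) (c i)) := by
  have hN0 : (0:ℝ) < N := by exact_mod_cast Nat.lt_of_lt_of_le Nat.zero_lt_one hN
  have h1ψ : 0 < 1 - ψ := by linarith
  have hφ0 : 0 < φ := by
    rw [hφ]
    exact div_pos (Finset.sum_pos (fun j _ => hδ j) (univ_nonempty_iff.2 ⟨i⟩)) hN0
  refine ⟨fun j => ?_, fun j hj => ?_, ?_⟩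
  · have hsum : ∀ x : ℝ, ∑ k, Function.update δ j x k
        = x + ∑ k ∈ univ \ {j}, δ k := by
      intro x
      exact Finset.sum_update_of_mem (mem_univ j) δ x
    have hD : HasDerivAt (fun x : ℝ =>
        ((∑ k, Function.update δ j x k) / N) / (1 - ψ) * c i)
        (1 / N / (1 - ψ) * c i) (δ j) := by
      simp only [hsum]
      exact ((((hasDerivAt_id (δ j)).add_const _).div_const (N:ℝ)).div_const
        (1 - ψ)).mul_const (c i)
    rw [hD.deriv]
    apply mul_neg_of_pos_of_neg _ hci
    positivity
  · have hsum : ∀ x : ℝ, ∑ k, Function.update c j x k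
        = x + ∑ k ∈ univ \ {j}, c k := by
      intro x
      exact Finset.sum_update_of_mem (mem_univ j) c x
    have htot : c j + ∑ k ∈ univ \ {j}, c k = ∑ k, c k := by
      rw [sdiff_singleton_eq_erase]
      exact Finset.add_sum_erase _ _ (mem_univ j)
    have hval : 1 - (c j + ∑ k ∈ univ \ {j}, c k) / N = 1 - ψ := by
      rw [htot, hψ]
    have hg : HasDerivAt (fun x : ℝ => 1 - (x + ∑ k ∈ univ \ {j}, c k) / N)
        (0 - 1 / N) (c j) := by
      exact (hasDerivAt_const (c j) 1).sub
        (((hasDerivAt_id (c j)).add_const _).div_const (N:ℝ))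
    have hD : HasDerivAt (fun x : ℝ =>
        φ / (1 - (∑ k, Function.update c j x k) / N) * c i)
        ((0 * (1 - ψ) - φ * (0 - 1 / N)) / (1 - ψ) ^ 2 * c i) (c j) := by
      simp only [hsum]
      have := ((hasDerivAt_const (c j) φ).div hg (by rw [hval]; linarith)).mul_const (c i)
      rwa [hval] at this
    rw [hD.deriv]
    apply mul_neg_of_pos_of_neg _ hci
    have : (0 * (1 - ψ) - φ * (0 - 1 / N)) = φ / N := by ring
    rw [this]
    positivity
  · have hsum : ∀ x : ℝ, ∑ k, Function.update c i x k
        = x + ∑ k ∈ univ \ {i}, c k := by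
      intro x
      exact Finset.sum_update_of_mem (mem_univ i) c x
    have htot : c i + ∑ k ∈ univ \ {i}, c k = ∑ k, c k := by
      rw [sdiff_singleton_eq_erase]
      exact Finset.add_sum_erase _ _ (mem_univ i)
    have hval : 1 - (c i + ∑ k ∈ univ \ {i}, c k) / N = 1 - ψ := by
      rw [htot, hψ]
    have hg : HasDerivAt (fun x : ℝ => 1 - (x + ∑ k ∈ univ \ {i}, c k) / N)
        (0 - 1 / N) (c i) := by
      exact (hasDerivAt_const (c i) 1).sub
        (((hasDerivAt_id (c i)).add_const _).div_const (N:ℝ))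
    have hD : HasDerivAt (fun x : ℝ =>
        φ / (1 - (∑ k, Function.update c i x k) / N) * x)
        ((0 * (1 - ψ) - φ * (0 - 1 / N)) / (1 - ψ) ^ 2 * c i
          + φ / (1 - ψ) * 1) (c i) := by
      simp only [hsum]
      have := ((hasDerivAt_const (c i) φ).div hg (by rw [hval]; linarith)).mul
        (hasDerivAt_id (c i))
      simp only [id, Pi.div_def, Pi.mul_def] at this
      rwa [hval] at this
    rw [hD.deriv]
    -- key inequality: ∑_{k ≠ i} c k ≤ N - 1, so c i / N + (1 - ψ) > 0
    have hcard : (univ \ {i} : Finset (Fin N)).card = N - 1 := by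
      rw [sdiff_singleton_eq_erase, Finset.card_erase_of_mem (mem_univ i),
        Finset.card_univ, Fintype.card_fin]
    have hkey : ∑ k ∈ univ \ {i}, c k ≤ (N:ℝ) - 1 := by
      calc ∑ k ∈ univ \ {i}, c k ≤ (univ \ {i}).card • (1:ℝ) :=
            Finset.sum_le_card_nsmul _ _ 1 (fun k _ => hc k)
        _ = (N:ℝ) - 1 := by
            rw [hcard, nsmul_eq_mul, mul_one]
            have : (1:ℕ) ≤ N := hN
            push_cast [Nat.cast_sub this]
            ring
    have hψeq : ψ = (c i + ∑ k ∈ univ \ {i}, c k) / N := by rw [htot, hψ]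
    have hpos : 0 < c i / N + (1 - ψ) := by
      rw [hψeq]
      rw [div_add' _ _ _ (ne_of_gt hN0), lt_div_iff₀ hN0]
      have : (N:ℝ) * (1 - (c i + ∑ k ∈ univ \ {i}, c k) / N)
          = N - (c i + ∑ k ∈ univ \ {i}, c k) := by
        field_simp
      nlinarith [hkey]
    have hexp : (0 * (1 - ψ) - φ * (0 - 1 / N)) / (1 - ψ) ^ 2 * c i + φ / (1 - ψ) * 1
        = φ / (1 - ψ) ^ 2 * (c i / N + (1 - ψ)) := by
      field_simp
      ring
    rw [hexp]
    positivity
end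

section
/- Let Δ = 1 + β²μ² + 2ρμβ with μ > 0, β > 0, ρ ∈ (−1,1), and suppose Δ > 0 and ρ² < 1. Define p(t) = ((1+ρμβ−√Δ)/((1−ρ²)β²)) · (1 − e^{−√Δ(T−t)}) / (1 − ((1+ρμβ−√Δ)/(1+ρμβ+√Δ)) e^{−√Δ(T−t)}) for t ∈ [0,T]. Then p is differentiable on [0,T], satisfies the Riccati ODE ṗ(t) − (1/2)(μ + ρβ p(t))² − p(t) + (1/2)β² p(t)² = 0, and p(T) = 0. -/
set_option maxHeartbeats 4000000 in
set_option maxRecDepth 100000 in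
theorem riccati_explicit_solution (μ β ρ T : ℝ) (hμ : 0 < μ) (hβ : 0 < β)
    (hρ1 : -1 < ρ) (hρ2 : ρ < 1) (hT : 0 ≤ T)
    (Δ : ℝ) (hΔdef : Δ = 1 + β ^ 2 * μ ^ 2 + 2 * ρ * μ * β) (hΔ : 0 < Δ)
    (hρsq : ρ ^ 2 < 1)
    (p : ℝ → ℝ)
    (hp : ∀ t : ℝ, p t =
      ((1 + ρ * μ * β - Real.sqrt Δ) / ((1 - ρ ^ 2) * β ^ 2)) *
        (1 - Real.exp (-Real.sqrt Δ * (T - t))) /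
        (1 - ((1 + ρ * μ * β - Real.sqrt Δ) / (1 + ρ * μ * β + Real.sqrt Δ)) *
          Real.exp (-Real.sqrt Δ * (T - t)))) :
    (∀ t ∈ Set.Icc (0 : ℝ) T, DifferentiableAt ℝ p t) ∧
    (∀ t ∈ Set.Icc (0 : ℝ) T,
      deriv p t - (1 / 2) * (μ + ρ * β * p t) ^ 2 - p t + (1 / 2) * β ^ 2 * (p t) ^ 2 = 0) ∧
    p T = 0 := by
  set s := Real.sqrt Δ with hs_def
  have hspos : 0 < s := Real.sqrt_pos.mpr hΔ
  have hs2 : s ^ 2 = 1 + β ^ 2 * μ ^ 2 + 2 * ρ * μ * β := by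
    rw [hs_def, Real.sq_sqrt hΔ.le, hΔdef]
  have hn2 : (1 + ρ * μ * β) ^ 2 < s ^ 2 := by
    nlinarith [mul_pos (mul_pos hμ hβ) (mul_pos hμ hβ)]
  have hB : 0 < 1 + ρ * μ * β + s := by nlinarith
  have hA : 1 + ρ * μ * β - s < 0 := by nlinarith
  have hw : (0:ℝ) < (1 - ρ ^ 2) * β ^ 2 := mul_pos (by nlinarith) (by positivity)
  have hK : (1 + ρ * μ * β - s) / (1 + ρ * μ * β + s) < 0 := div_neg_of_neg_of_pos hA hB
  have hE : ∀ t : ℝ, (0:ℝ) < Real.exp (-s * (T - t)) := fun t => Real.exp_pos _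
  have hD : ∀ t : ℝ, (0:ℝ) < 1 - ((1 + ρ * μ * β - s) / (1 + ρ * μ * β + s)) *
      Real.exp (-s * (T - t)) := by
    intro t
    nlinarith [mul_neg_of_neg_of_pos hK (hE t)]
  have hder : ∀ t : ℝ, HasDerivAt p
      ((((1 + ρ * μ * β - s) / ((1 - ρ ^ 2) * β ^ 2)) * (0 - s * Real.exp (-s * (T - t))) *
          (1 - ((1 + ρ * μ * β - s) / (1 + ρ * μ * β + s)) * Real.exp (-s * (T - t))) -
        ((1 + ρ * μ * β - s) / ((1 - ρ ^ 2) * β ^ 2)) * (1 - Real.exp (-s * (T - t))) *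
          (0 - ((1 + ρ * μ * β - s) / (1 + ρ * μ * β + s)) * (s * Real.exp (-s * (T - t))))) /
        (1 - ((1 + ρ * μ * β - s) / (1 + ρ * μ * β + s)) * Real.exp (-s * (T - t))) ^ 2) t := by
    intro t
    have hexp : HasDerivAt (fun u => Real.exp (-s * (T - u))) (s * Real.exp (-s * (T - t))) t := by
      have h1 : HasDerivAt (fun u : ℝ => -s * (T - u)) s t := by
        simpa using ((hasDerivAt_const t T).sub (hasDerivAt_id t)).const_mul (-s)
      simpa [mul_comm] using h1.exp
    have hnum : HasDerivAt (fun u => ((1 + ρ * μ * β - s) / ((1 - ρ ^ 2) * β ^ 2)) *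
        (1 - Real.exp (-s * (T - u))))
        (((1 + ρ * μ * β - s) / ((1 - ρ ^ 2) * β ^ 2)) * (0 - s * Real.exp (-s * (T - t)))) t :=
      ((hasDerivAt_const t (1:ℝ)).sub hexp).const_mul _
    have hden : HasDerivAt (fun u => 1 - ((1 + ρ * μ * β - s) / (1 + ρ * μ * β + s)) *
        Real.exp (-s * (T - u)))
        (0 - ((1 + ρ * μ * β - s) / (1 + ρ * μ * β + s)) * (s * Real.exp (-s * (T - t)))) t :=
      (hasDerivAt_const t (1:ℝ)).sub (hexp.const_mul _)
    have := hnum.div hden (hD t).ne'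
    have hpfun : p = fun u => ((1 + ρ * μ * β - s) / ((1 - ρ ^ 2) * β ^ 2)) *
        (1 - Real.exp (-s * (T - u))) /
        (1 - ((1 + ρ * μ * β - s) / (1 + ρ * μ * β + s)) * Real.exp (-s * (T - u))) :=
      funext hp
    rw [hpfun]
    exact this
  refine ⟨fun t _ => (hder t).differentiableAt, fun t _ => ?_, ?_⟩
  · rw [(hder t).deriv, hp t]
    set E := Real.exp (-s * (T - t)) with hE_def
    have hEpos := hE t
    have hDpos := hD t
    rw [← hE_def] at hDpos
    have hwne : ((1 - ρ ^ 2) * β ^ 2) ≠ 0 := hw.ne'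
    have hρne : (1 - ρ ^ 2) ≠ 0 := by nlinarith
    have hBne : (1 + ρ * μ * β + s) ≠ 0 := hB.ne'
    have hDBpos : 0 < 1 + ρ * μ * β + s - (1 + ρ * μ * β - s) * E := by
      have h0 : 0 < (1 + ρ * μ * β + s) * (1 - (1 + ρ * μ * β - s) / (1 + ρ * μ * β + s) * E) :=
        mul_pos hB hDpos
      have h1 : (1 + ρ * μ * β + s) * (1 - (1 + ρ * μ * β - s) / (1 + ρ * μ * β + s) * E)
          = 1 + ρ * μ * β + s - (1 + ρ * μ * β - s) * E := by
        field_simp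
      linarith [h1 ▸ h0]
    have hDBne : 1 + ρ * μ * β + s - (1 + ρ * μ * β - s) * E ≠ 0 := hDBpos.ne'
    have hDBne' : 1 + β * ρ * μ + s - (1 + β * ρ * μ - s) * E ≠ 0 := by
      intro h; apply hDBne; linear_combination h
    have hDval : ((1 + ρ * μ * β - s) / ((1 - ρ ^ 2) * β ^ 2) * (0 - s * E) *
            (1 - (1 + ρ * μ * β - s) / (1 + ρ * μ * β + s) * E) -
          (1 + ρ * μ * β - s) / ((1 - ρ ^ 2) * β ^ 2) * (1 - E) *
            (0 - (1 + ρ * μ * β - s) / (1 + ρ * μ * β + s) * (s * E))) /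
        (1 - (1 + ρ * μ * β - s) / (1 + ρ * μ * β + s) * E) ^ 2
        = (1 + ρ * μ * β - s) * (s * E) * (1 + ρ * μ * β + s) *
            ((1 - E) * (1 + ρ * μ * β - s) - (1 + ρ * μ * β + s - (1 + ρ * μ * β - s) * E)) /
          ((1 - ρ ^ 2) * β ^ 2 * (1 + ρ * μ * β + s - (1 + ρ * μ * β - s) * E) ^ 2) := by
      rw [div_eq_div_iff (by positivity) (by positivity)]
      field_simp
      ring
    have hPval : (1 + ρ * μ * β - s) / ((1 - ρ ^ 2) * β ^ 2) * (1 - E) /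
        (1 - (1 + ρ * μ * β - s) / (1 + ρ * μ * β + s) * E)
        = (1 + ρ * μ * β - s) * (1 + ρ * μ * β + s) * (1 - E) /
          ((1 - ρ ^ 2) * β ^ 2 * (1 + ρ * μ * β + s - (1 + ρ * μ * β - s) * E)) := by
      rw [div_eq_div_iff (by positivity) (by positivity)]
      field_simp
    rw [hDval, hPval]
    have hd1 : ((1 - ρ ^ 2) * β ^ 2 * (1 + ρ * μ * β + s - (1 + ρ * μ * β - s) * E) ^ 2 : ℝ) ≠ 0 := mul_ne_zero hwne (pow_ne_zero 2 hDBne)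
    have hd2 : ((1 - ρ ^ 2) * β ^ 2 * (1 + ρ * μ * β + s - (1 + ρ * μ * β - s) * E) : ℝ) ≠ 0 := mul_ne_zero hwne hDBne
    have hM2 : ((2 * ((1 - ρ ^ 2) * β ^ 2 * (1 + ρ * μ * β + s - (1 + ρ * μ * β - s) * E)) ^ 2) : ℝ) ≠ 0 := mul_ne_zero two_ne_zero (pow_ne_zero 2 hd2)
    have h1 : (1 + ρ * μ * β - s) * (s * E) * (1 + ρ * μ * β + s) *
            ((1 - E) * (1 + ρ * μ * β - s) - (1 + ρ * μ * β + s - (1 + ρ * μ * β - s) * E)) / ((1 - ρ ^ 2) * β ^ 2 * (1 + ρ * μ * β + s - (1 + ρ * μ * β - s) * E) ^ 2)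
        = (2 * ((1 - ρ ^ 2) * β ^ 2) * ((1 + ρ * μ * β - s) * (s * E) * (1 + ρ * μ * β + s) *
            ((1 - E) * (1 + ρ * μ * β - s) - (1 + ρ * μ * β + s - (1 + ρ * μ * β - s) * E)))) / (2 * ((1 - ρ ^ 2) * β ^ 2 * (1 + ρ * μ * β + s - (1 + ρ * μ * β - s) * E)) ^ 2) := by
      rw [div_eq_div_iff hd1 hM2]; ring
    have h2 : 1 / 2 * (μ + ρ * β * ((1 + ρ * μ * β - s) * (1 + ρ * μ * β + s) * (1 - E) / ((1 - ρ ^ 2) * β ^ 2 * (1 + ρ * μ * β + s - (1 + ρ * μ * β - s) * E)))) ^ 2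
        = (μ * ((1 - ρ ^ 2) * β ^ 2) * (1 + ρ * μ * β + s - (1 + ρ * μ * β - s) * E) + ρ * β * ((1 + ρ * μ * β - s) * (1 + ρ * μ * β + s) * (1 - E))) ^ 2 / (2 * ((1 - ρ ^ 2) * β ^ 2 * (1 + ρ * μ * β + s - (1 + ρ * μ * β - s) * E)) ^ 2) := by
      rw [eq_div_iff hM2]
      have key : ∀ N Q : ℝ, Q ≠ 0 → 1 / 2 * (μ + ρ * β * (N / Q)) ^ 2 * (2 * Q ^ 2) = (μ * Q + ρ * β * N) ^ 2 := by
        intro N Q hQ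
        have h := mul_inv_cancel₀ hQ
        rw [div_eq_mul_inv]
        linear_combination ((ρ * β * N) ^ 2 * (Q * Q⁻¹ + 1) + 2 * μ * ρ * β * N * Q) * h
      rw [key _ _ hd2]
      ring
    have h3 : (1 + ρ * μ * β - s) * (1 + ρ * μ * β + s) * (1 - E) / ((1 - ρ ^ 2) * β ^ 2 * (1 + ρ * μ * β + s - (1 + ρ * μ * β - s) * E))
        = (2 * ((1 - ρ ^ 2) * β ^ 2) * (1 + ρ * μ * β + s - (1 + ρ * μ * β - s) * E) * ((1 + ρ * μ * β - s) * (1 + ρ * μ * β + s) * (1 - E))) / (2 * ((1 - ρ ^ 2) * β ^ 2 * (1 + ρ * μ * β + s - (1 + ρ * μ * β - s) * E)) ^ 2) := by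
      rw [div_eq_div_iff hd2 hM2]; ring
    have h4 : 1 / 2 * β ^ 2 * ((1 + ρ * μ * β - s) * (1 + ρ * μ * β + s) * (1 - E) / ((1 - ρ ^ 2) * β ^ 2 * (1 + ρ * μ * β + s - (1 + ρ * μ * β - s) * E))) ^ 2
        = (β ^ 2 * ((1 + ρ * μ * β - s) * (1 + ρ * μ * β + s) * (1 - E)) ^ 2) / (2 * ((1 - ρ ^ 2) * β ^ 2 * (1 + ρ * μ * β + s - (1 + ρ * μ * β - s) * E)) ^ 2) := by
      rw [eq_div_iff hM2]
      field_simp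
    rw [h2, h4, h3, h1, div_sub_div_same, div_sub_div_same, ← add_div, div_eq_zero_iff]
    left
    linear_combination (β ^ 2 + (-2) * β ^ 2 * E + β ^ 2 * E ^ 2 + (2) * β ^ 2 * s + (-2) * β ^ 2 * s * E ^ 2 + β ^ 2 * s ^ 2 + (2) * β ^ 2 * s ^ 2 * E + β ^ 2 * s ^ 2 * E ^ 2 + (-1) * β ^ 2 * ρ ^ 2 + (2) * β ^ 2 * ρ ^ 2 * E + (-1) * β ^ 2 * ρ ^ 2 * E ^ 2 + (-2) * β ^ 2 * ρ ^ 2 * s + (2) * β ^ 2 * ρ ^ 2 * s * E ^ 2 + (-1) * β ^ 2 * ρ ^ 2 * s ^ 2 + (-2) * β ^ 2 * ρ ^ 2 * s ^ 2 * E + (-1) * β ^ 2 * ρ ^ 2 * s ^ 2 * E ^ 2 + (2) * μ * β ^ 3 * ρ + (-4) * μ * β ^ 3 * ρ * E + (2) * μ * β ^ 3 * ρ * E ^ 2 + (2) * μ * β ^ 3 * ρ * s + (-2) * μ * β ^ 3 * ρ * s * E ^ 2 + (-2) * μ * β ^ 3 * ρ ^ 3 + (4) * μ * β ^ 3 * ρ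 ^ 3 * E + (-2) * μ * β ^ 3 * ρ ^ 3 * E ^ 2 + (-2) * μ * β ^ 3 * ρ ^ 3 * s + (2) * μ * β ^ 3 * ρ ^ 3 * s * E ^ 2 + μ ^ 2 * β ^ 4 * ρ ^ 2 + (-2) * μ ^ 2 * β ^ 4 * ρ ^ 2 * E + μ ^ 2 * β ^ 4 * ρ ^ 2 * E ^ 2 + (-1) * μ ^ 2 * β ^ 4 * ρ ^ 4 + (2) * μ ^ 2 * β ^ 4 * ρ ^ 4 * E + (-1) * μ ^ 2 * β ^ 4 * ρ ^ 4 * E ^ 2) * hs2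
  · rw [hp T]
    simp
end

section
/- Let ζ: [0,T] × ℝ → ℝ be a C^{1,2} function with ζ > 0, and define f(t,y) = (1/(1−ρ²)) ln ζ(t,y) for ρ ∈ (−1,1). If ζ satisfies ζ_t + (1/2)a²(t,y)ζ_{yy} + (b(t,y) − ρλ(t,y)a(t,y))ζ_y = (1/2)(1−ρ²)λ²(t,y)ζ with ζ(T,y) = 1, then f satisfies f_t + (1/2)a²(t,y)f_{yy} + (b(t,y) − ρλ(t,y)a(t,y))f_y + (1/2)(1−ρ²)a²(t,y)f_y² = (1/2)λ²(t,y) with f(T,y) = 0. -/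
/-- The distortion (Hopf–Cole type) transformation: if `ζ > 0` solves the linear
PDE `ζ_t + ½a²ζ_yy + (b − ρλa)ζ_y = ½(1−ρ²)λ²ζ` with `ζ(T,·) = 1`, then
`f = (1/(1−ρ²)) ln ζ` solves the semilinear PDE
`f_t + ½a²f_yy + (b − ρλa)f_y + ½(1−ρ²)a²f_y² = ½λ²` with `f(T,·) = 0`. -/
theorem distortion_transformation (ρ T : ℝ) (hρ1 : -1 < ρ) (hρ2 : ρ < 1)
    (a b lam : ℝ → ℝ → ℝ) (ζ : ℝ → ℝ → ℝ)
    (hζpos : ∀ t y, 0 < ζ t y)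
    (hζt : ∀ y, Differentiable ℝ (fun τ => ζ τ y))
    (hζy : ∀ t, ContDiff ℝ 2 (fun y => ζ t y))
    (hPDE : ∀ t y,
      deriv (fun τ => ζ τ y) t
        + (1 / 2) * (a t y) ^ 2 * deriv (deriv (fun y' => ζ t y')) y
        + (b t y - ρ * lam t y * a t y) * deriv (fun y' => ζ t y') y
      = (1 / 2) * (1 - ρ ^ 2) * (lam t y) ^ 2 * ζ t y)
    (hterm : ∀ y, ζ T y = 1)
    (f : ℝ → ℝ → ℝ)
    (hf : ∀ t y, f t y = (1 / (1 - ρ ^ 2)) * Real.log (ζ t y)) :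
    (∀ t y,
      deriv (fun τ => f τ y) t
        + (1 / 2) * (a t y) ^ 2 * deriv (deriv (fun y' => f t y')) y
        + (b t y - ρ * lam t y * a t y) * deriv (fun y' => f t y') y
        + (1 / 2) * (1 - ρ ^ 2) * (a t y) ^ 2 * (deriv (fun y' => f t y') y) ^ 2
      = (1 / 2) * (lam t y) ^ 2) ∧
    (∀ y, f T y = 0) := by
  have hρ : 0 < 1 - ρ ^ 2 := by nlinarith
  constructor
  · intro t y
    set c : ℝ := 1 / (1 - ρ ^ 2) with hcdef
    have hg : ContDiff ℝ 2 (fun y' => ζ t y') := hζy t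
    have hgd : Differentiable ℝ (fun y' => ζ t y') := hg.differentiable (by norm_num)
    have hgd' : Differentiable ℝ (deriv fun y' => ζ t y') := by
      have h2 : ContDiff ℝ ((1 : ℕ) + 1) (fun y' => ζ t y') := by exact_mod_cast hg
      exact ((contDiff_succ_iff_deriv.mp h2).2.2).differentiable (by norm_num)
    -- first y-derivative of f
    have hfy : ∀ x : ℝ, deriv (fun y' => f t y') x
        = c * ((ζ t x)⁻¹ * deriv (fun y' => ζ t y') x) := by
      intro x
      have h1 : HasDerivAt (fun y' => c * Real.log (ζ t y'))
          (c * ((ζ t x)⁻¹ * deriv (fun y' => ζ t y') x)) x := by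
        exact ((Real.hasDerivAt_log (hζpos t x).ne').comp x
          (hgd x).hasDerivAt).const_mul c
      have : (fun y' => f t y') = fun y' => c * Real.log (ζ t y') := by
        funext y'; rw [hf]
      rw [this]; exact h1.deriv
    -- second y-derivative of f
    have hfyy : deriv (deriv (fun y' => f t y')) y
        = c * ((deriv (deriv fun y' => ζ t y') y * ζ t y
            - deriv (fun y' => ζ t y') y * deriv (fun y' => ζ t y') y) / (ζ t y) ^ 2) := by
      have heq : deriv (fun y' => f t y')
          = fun x => c * (deriv (fun y' => ζ t y') x / ζ t x) := by
        funext x; rw [hfy x]; ring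
      rw [heq]
      have h2 : HasDerivAt (fun x => c * (deriv (fun y' => ζ t y') x / ζ t x))
          (c * ((deriv (deriv fun y' => ζ t y') y * ζ t y
            - deriv (fun y' => ζ t y') y * deriv (fun y' => ζ t y') y) / (ζ t y) ^ 2)) y := by
        exact ((hgd' y).hasDerivAt.div (hgd y).hasDerivAt (hζpos t y).ne').const_mul c
      exact h2.deriv
    -- t-derivative of f
    have hft : deriv (fun τ => f τ y) t
        = c * ((ζ t y)⁻¹ * deriv (fun τ => ζ τ y) t) := by
      have h1 : HasDerivAt (fun τ => c * Real.log (ζ τ y))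
          (c * ((ζ t y)⁻¹ * deriv (fun τ => ζ τ y) t)) t := by
        exact ((Real.hasDerivAt_log (hζpos t y).ne').comp t
          ((hζt y) t).hasDerivAt).const_mul c
      have : (fun τ => f τ y) = fun τ => c * Real.log (ζ τ y) := by
        funext τ; rw [hf]
      rw [this]; exact h1.deriv
    rw [hft, hfyy, hfy y]
    have hz : (ζ t y) ≠ 0 := (hζpos t y).ne'
    have hE := hPDE t y
    rw [hcdef]
    field_simp
    linear_combination (2 * ζ t y) * hE
  · intro y
    rw [hf, hterm, Real.log_one, mul_zero]
end
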